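/- Let P ≻ 0, R ≻ 0, C a p×n matrix, K = P Cᵀ (C P Cᵀ + R)⁻¹, and P⁺ = P − K C P. Then Kᵀ (P⁺)⁻¹ K = R⁻¹ C P⁺ Cᵀ R⁻¹. -/
import Mathlib


open Matrix

theorem kf_gain_identity (n p : ℕ)
    (P : Matrix (Fin n) (Fin n) ℝ) (C : Matrix (Fin p) (Fin n) ℝ)
    (R : Matrix (Fin p) (Fin p) ℝ)
    (hP : P.PosDef) (hR : R.PosDef) :
    let K := P * Cᵀ * (C * P * Cᵀ + R)⁻¹
    let Pplus := P - K * C * P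
    Kᵀ * Pplus⁻¹ * K = R⁻¹ * C * Pplus * Cᵀ * R⁻¹ := by
  intro K Pplus
  have hKeq : K = P * Cᵀ * (C * P * Cᵀ + R)⁻¹ := rfl
  have hPpluseq : Pplus = P - K * C * P := rfl
  clear_value K Pplus
  have hPt : Pᵀ = P := by
    have := hP.isHermitian.eq
    rwa [conjTranspose_eq_transpose_of_trivial] at this
  have hRt : Rᵀ = R := by
    have := hR.isHermitian.eq
    rwa [conjTranspose_eq_transpose_of_trivial] at this
  have hS : (C * P * Cᵀ + R).PosDef := by
    have h1 : (C * P * Cᵀ).PosSemidef := by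
      have := hP.posSemidef.mul_mul_conjTranspose_same C
      rwa [conjTranspose_eq_transpose_of_trivial] at this
    exact Matrix.PosDef.posSemidef_add h1 hR
  set S := C * P * Cᵀ + R with hSdef
  have hSdet : IsUnit S.det := isUnit_iff_ne_zero.mpr (ne_of_gt hS.det_pos)
  have hRdet : IsUnit R.det := isUnit_iff_ne_zero.mpr (ne_of_gt hR.det_pos)
  have hPdet : IsUnit P.det := isUnit_iff_ne_zero.mpr (ne_of_gt hP.det_pos)
  have hSS : S⁻¹ * S = 1 := nonsing_inv_mul S hSdet
  have hRR : R * R⁻¹ = 1 := mul_nonsing_inv R hRdet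
  have hPP : P * P⁻¹ = 1 := mul_nonsing_inv P hPdet
  have hSt : Sᵀ = S := by
    rw [hSdef, transpose_add, transpose_mul, transpose_mul, transpose_transpose, hPt, hRt,
      Matrix.mul_assoc]
  -- key identity
  have hX : S⁻¹ * (C * (P * (Cᵀ * R⁻¹))) = R⁻¹ - S⁻¹ := by
    have h2 : S⁻¹ * (C * P * Cᵀ + R) * R⁻¹ = R⁻¹ := by
      rw [← hSdef, hSS, Matrix.one_mul]
    simp only [Matrix.mul_add, Matrix.add_mul, Matrix.mul_assoc, hRR, Matrix.mul_one] at h2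
    exact eq_sub_of_add_eq h2
  -- K = Pplus * Cᵀ * R⁻¹
  have hK : Pplus * (Cᵀ * R⁻¹) = K := by
    rw [hPpluseq, hKeq]
    simp only [Matrix.sub_mul, Matrix.mul_assoc]
    rw [hX]
    simp only [Matrix.mul_sub]
    abel
  -- Pplus is symmetric
  have hPplusT : Pplusᵀ = Pplus := by
    rw [hPpluseq, hKeq]
    simp only [transpose_sub, transpose_mul, transpose_transpose,
      transpose_nonsing_inv, hSt, hPt, Matrix.mul_assoc]
  -- Woodbury: Pplus * (P⁻¹ + Cᵀ R⁻¹ C) = 1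
  have hX2 : S⁻¹ * (C * (P * (Cᵀ * (R⁻¹ * C)))) = R⁻¹ * C - S⁻¹ * C := by
    have := congrArg (fun M => M * C) hX
    simpa only [Matrix.sub_mul, Matrix.mul_assoc] using this
  have hWood : Pplus * (P⁻¹ + Cᵀ * R⁻¹ * C) = 1 := by
    rw [hPpluseq, hKeq]
    simp only [Matrix.sub_mul, Matrix.mul_add, Matrix.mul_sub, Matrix.add_mul, Matrix.mul_assoc, hPP, Matrix.mul_one]
    rw [hX2]
    simp only [Matrix.mul_sub, Matrix.mul_add, Matrix.sub_mul, Matrix.add_mul]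
    abel
  have hPplusDet : IsUnit Pplus.det := isUnit_det_of_right_inverse hWood
  have hPP1 : Pplus * Pplus⁻¹ = 1 := mul_nonsing_inv Pplus hPplusDet
  -- Kᵀ = R⁻¹ * C * Pplus
  have hKT : Kᵀ = R⁻¹ * (C * Pplus) := by
    rw [← hK]
    simp only [transpose_mul, transpose_transpose, transpose_nonsing_inv, hRt, hPplusT,
      Matrix.mul_assoc]
  calc Kᵀ * Pplus⁻¹ * K
      = R⁻¹ * (C * ((Pplus * Pplus⁻¹) * (Pplus * (Cᵀ * R⁻¹)))) := by
        rw [hKT, ← hK]; simp only [Matrix.mul_assoc]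
    _ = R⁻¹ * C * Pplus * Cᵀ * R⁻¹ := by
        rw [hPP1, Matrix.one_mul]; simp only [Matrix.mul_assoc]
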